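/- Let γ:[0,ℓ]→ℝ² be a unit-speed curve in the Euclidean plane whose curvature satisfies |κ(t)| ≤ Λ for all t. If ℓ < 2/Λ, then t ↦ |γ(t) − γ(0)| is strictly increasing on [0,ℓ], and the length satisfies d ≤ ℓ ≤ (2/Λ) arcsin(Λ d / 2), where d = |γ(ℓ) − γ(0)|. -/

import Mathlib

open Real

private lemma proj_hasDerivAt' {f : ℝ → EuclideanSpace ℝ (Fin 2)} {f' : EuclideanSpace ℝ (Fin 2)} {t : ℝ} (i : Fin 2)
    (h : HasDerivAt f f' t) : HasDerivAt (fun s => f s i) (f' i) t := by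
  simpa [Function.comp_def] using (EuclideanSpace.proj (𝕜 := ℝ) i).hasFDerivAt.comp_hasDerivAt t h

private lemma sq_comp' (x : EuclideanSpace ℝ (Fin 2)) : (x 0)^2 + (x 1)^2 = ‖x‖^2 := by
  rw [EuclideanSpace.norm_eq, Real.sq_sqrt (by positivity)]
  simp [Fin.sum_univ_two]

private lemma proj_continuous' {f : ℝ → EuclideanSpace ℝ (Fin 2)} (hf : Continuous f) (i : Fin 2) :
    Continuous fun t => f t i := by
  simpa [Function.comp_def] using ((EuclideanSpace.proj (𝕜 := ℝ) i).continuous.comp hf)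

set_option maxHeartbeats 1000000 in
theorem bounded_curvature_curve_length
    (γ : ℝ → EuclideanSpace ℝ (Fin 2)) (Λ ℓ : ℝ)
    (hΛ : 0 < Λ) (hℓ : 0 < ℓ) (hshort : ℓ < 2 / Λ)
    (hγ : ContDiff ℝ 2 γ)
    (hspeed : ∀ t ∈ Set.Icc (0:ℝ) ℓ, ‖deriv γ t‖ = 1)
    (hcurv : ∀ t ∈ Set.Icc (0:ℝ) ℓ, ‖deriv (deriv γ) t‖ ≤ Λ) :
    StrictMonoOn (fun t => ‖γ t - γ 0‖) (Set.Icc 0 ℓ) ∧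
    ‖γ ℓ - γ 0‖ ≤ ℓ ∧
    ℓ ≤ (2 / Λ) * Real.arcsin (Λ * ‖γ ℓ - γ 0‖ / 2) := by
  have hΛℓ : Λ * ℓ < 2 := by
    have := (lt_div_iff₀ hΛ).mp hshort; linarith [this]
  set T := deriv γ with hTdef
  set A := deriv T with hAdef
  -- regularity
  have h2 : ContDiff ℝ ((1:WithTop ℕ∞)+1) γ := by exact_mod_cast hγ
  have hreg := contDiff_succ_iff_deriv.mp h2
  have hdγ : Differentiable ℝ γ := hreg.1
  have hreg1 := contDiff_succ_iff_deriv.mp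
    ((by exact_mod_cast hreg.2.2 : ContDiff ℝ ((0:WithTop ℕ∞)+1) T))
  have hdT : Differentiable ℝ T := hreg1.1
  have hcA : Continuous A := hreg1.2.2.continuous
  have hcT : Continuous T := hdT.continuous
  have hTd : ∀ t (i : Fin 2), HasDerivAt (fun s => γ s i) (T t i) t :=
    fun t i => proj_hasDerivAt' i (hdγ t).hasDerivAt
  have hAd : ∀ t (i : Fin 2), HasDerivAt (fun s => T s i) (A t i) t :=
    fun t i => proj_hasDerivAt' i (hdT t).hasDerivAt
  have cT : ∀ i : Fin 2, Continuous fun t => T t i := proj_continuous' hcT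
  have cA : ∀ i : Fin 2, Continuous fun t => A t i := proj_continuous' hcA
  have cγ : ∀ i : Fin 2, Continuous fun t => γ t i := proj_continuous' hdγ.continuous
  -- basic pointwise facts on Icc
  have hunit : ∀ t ∈ Set.Icc (0:ℝ) ℓ, (T t 0)^2 + (T t 1)^2 = 1 := by
    intro t ht; rw [sq_comp', hspeed t ht]; norm_num
  have hA2 : ∀ t ∈ Set.Icc (0:ℝ) ℓ, (A t 0)^2 + (A t 1)^2 ≤ Λ^2 := by
    intro t ht; rw [sq_comp']
    exact pow_le_pow_left₀ (norm_nonneg _) (hcurv t ht) 2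
  -- orthogonality  T ⟂ A  on Icc
  have horth : ∀ t ∈ Set.Icc (0:ℝ) ℓ, T t 0 * A t 0 + T t 1 * A t 1 = 0 := by
    have hq : ∀ t, HasDerivAt (fun s => (T s 0)^2 + (T s 1)^2)
        (2 * (T t 0 * A t 0 + T t 1 * A t 1)) t := by
      intro t
      have := ((hAd t 0).pow 2).add ((hAd t 1).pow 2)
      refine this.congr_deriv ?_; push_cast; ring
    have hIoo : ∀ t ∈ Set.Ioo (0:ℝ) ℓ, T t 0 * A t 0 + T t 1 * A t 1 = 0 := by
      intro t ht
      have hev : (fun s => (T s 0)^2 + (T s 1)^2) =ᶠ[nhds t] fun _ => 1 :=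
        Filter.eventuallyEq_of_mem (Ioo_mem_nhds ht.1 ht.2)
          (fun x hx => hunit x (Set.Ioo_subset_Icc_self hx))
      have h0 : HasDerivAt (fun s => (T s 0)^2 + (T s 1)^2) 0 t :=
        (hasDerivAt_const t (1:ℝ)).congr_of_eventuallyEq hev
      have := (hq t).unique h0
      linarith
    have hcont : Continuous fun t => T t 0 * A t 0 + T t 1 * A t 1 :=
      ((cT 0).mul (cA 0)).add ((cT 1).mul (cA 1))
    have hcl := (Set.EqOn.closure (fun x hx => hIoo x hx) hcont continuous_const)
    intro t ht
    exact hcl (by rwa [closure_Ioo hℓ.ne])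
  -- chord bound for T
  have hTWithin : ∀ t ∈ Set.Icc (0:ℝ) ℓ, HasDerivWithinAt T (A t) (Set.Icc 0 ℓ) t :=
    fun t _ => (hdT t).hasDerivAt.hasDerivWithinAt
  have hTchord : ∀ s ∈ Set.Icc (0:ℝ) ℓ, ∀ t ∈ Set.Icc (0:ℝ) ℓ, ‖T t - T s‖ ≤ Λ * |t - s| := by
    intro s hs t ht
    have := Convex.norm_image_sub_le_of_norm_hasDerivWithin_le hTWithin
      (fun x hx => hcurv x hx) (convex_Icc 0 ℓ) hs ht
    simpa [Real.norm_eq_abs] using this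
  -- inner product lower bound
  have hinner : ∀ s ∈ Set.Icc (0:ℝ) ℓ, ∀ t ∈ Set.Icc (0:ℝ) ℓ,
      1 - Λ^2*(t-s)^2/2 ≤ T s 0 * T t 0 + T s 1 * T t 1 := by
    intro s hs t ht
    have hc := hTchord s hs t ht
    have hsq : (T t 0 - T s 0)^2 + (T t 1 - T s 1)^2 ≤ Λ^2 * (t-s)^2 := by
      have h1 : ((T t - T s) 0)^2 + ((T t - T s) 1)^2 = ‖T t - T s‖^2 := sq_comp' _
      have h2 : ‖T t - T s‖^2 ≤ (Λ * |t - s|)^2 :=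
        pow_le_pow_left₀ (norm_nonneg _) hc 2
      have h3 : (T t - T s) 0 = T t 0 - T s 0 := rfl
      have h4 : (T t - T s) 1 = T t 1 - T s 1 := rfl
      rw [h3, h4] at h1
      calc (T t 0 - T s 0)^2 + (T t 1 - T s 1)^2 = ‖T t - T s‖^2 := h1
        _ ≤ (Λ * |t - s|)^2 := h2
        _ = Λ^2 * (t-s)^2 := by rw [mul_pow, sq_abs]
    nlinarith [hunit s hs, hunit t ht]
  -- Part 2 : chord ≤ length
  have hmem0 : (0:ℝ) ∈ Set.Icc (0:ℝ) ℓ := ⟨le_refl _, hℓ.le⟩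
  have hmemℓ : ℓ ∈ Set.Icc (0:ℝ) ℓ := ⟨hℓ.le, le_refl _⟩
  have part2 : ‖γ ℓ - γ 0‖ ≤ ℓ := by
    have := Convex.norm_image_sub_le_of_norm_hasDerivWithin_le
      (f' := T) (fun t _ => (hdγ t).hasDerivAt.hasDerivWithinAt)
      (fun x hx => le_of_eq (hspeed x hx)) (convex_Icc 0 ℓ) hmem0 hmemℓ
    simpa [Real.norm_eq_abs, abs_of_pos hℓ] using this
  -- Part 1 : strict monotonicity
  have part1 : StrictMonoOn (fun t => ‖γ t - γ 0‖) (Set.Icc 0 ℓ) := by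
    set g : ℝ → ℝ := fun t => (γ t 0 - γ 0 0)^2 + (γ t 1 - γ 0 1)^2 with hgdef
    have hg : ∀ t, HasDerivAt g
        (2*((γ t 0 - γ 0 0)*(T t 0) + (γ t 1 - γ 0 1)*(T t 1))) t := by
      intro t
      have := (((hTd t 0).sub_const (γ 0 0)).pow 2).add (((hTd t 1).sub_const (γ 0 1)).pow 2)
      refine this.congr_deriv ?_; push_cast; ring
    have hgpos : ∀ r ∈ Set.Ioo (0:ℝ) ℓ, 0 < deriv g r := by
      intro r hr
      have hrIcc : r ∈ Set.Icc (0:ℝ) ℓ := Set.Ioo_subset_Icc_self hr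
      -- the inner product as an integral
      have hFTC : ∫ s in (0:ℝ)..r, (T s 0 * T r 0 + T s 1 * T r 1)
          = (γ r 0 - γ 0 0)*(T r 0) + (γ r 1 - γ 0 1)*(T r 1) := by
        have hder : ∀ s ∈ Set.uIcc (0:ℝ) r,
            HasDerivAt (fun w => γ w 0 * T r 0 + γ w 1 * T r 1)
              (T s 0 * T r 0 + T s 1 * T r 1) s :=
          fun s _ => ((hTd s 0).mul_const _).add ((hTd s 1).mul_const _)
        have hint : IntervalIntegrable (fun s => T s 0 * T r 0 + T s 1 * T r 1)
            MeasureTheory.volume 0 r :=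
          (((cT 0).mul continuous_const).add ((cT 1).mul continuous_const)).intervalIntegrable 0 r
        rw [intervalIntegral.integral_eq_sub_of_hasDerivAt hder hint]; ring
      have hlow : r - Λ^2*r^3/6 ≤ ∫ s in (0:ℝ)..r, (T s 0 * T r 0 + T s 1 * T r 1) := by
        have hcomp : ∫ s in (0:ℝ)..r, (1 - Λ^2*(r-s)^2/2) = r - Λ^2*r^3/6 := by
          have hder : ∀ s ∈ Set.uIcc (0:ℝ) r,
              HasDerivAt (fun w => w + Λ^2*(r-w)^3/6) (1 - Λ^2*(r-s)^2/2) s := by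
            intro s _
            have h1 : HasDerivAt (fun w : ℝ => (r-w)^3) (3*(r-s)^2*(-1)) s := by
              have := (((hasDerivAt_id s).const_sub r).pow 3)
              refine this.congr_deriv ?_; push_cast; simp only [id]
            have := (hasDerivAt_id s).add ((h1.const_mul (Λ^2)).div_const 6)
            refine this.congr_deriv ?_; ring
          rw [intervalIntegral.integral_eq_sub_of_hasDerivAt hder
            (by apply Continuous.intervalIntegrable; fun_prop)]
          ring
        rw [← hcomp]
        apply intervalIntegral.integral_mono_on hr.1.le
          (by apply Continuous.intervalIntegrable; fun_prop)
          ((((cT 0).mul continuous_const).add ((cT 1).mul continuous_const)).intervalIntegrable 0 r)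
        intro s hs
        exact hinner s ⟨hs.1, hs.2.trans hr.2.le⟩ r hrIcc
      have hpos : 0 < r - Λ^2*r^3/6 := by
        have h1 : Λ * r < 2 := lt_of_le_of_lt (by nlinarith [hr.2, hΛ.le]) hΛℓ
        nlinarith [hr.1, sq_nonneg (Λ*r), hΛ.le, mul_pos hΛ hr.1]
      rw [(hg r).deriv]
      rw [hFTC] at hlow
      linarith
    have hgmono : StrictMonoOn g (Set.Icc 0 ℓ) := by
      apply strictMonoOn_of_deriv_pos (convex_Icc 0 ℓ)
      · exact (((cγ 0).sub continuous_const).pow 2).add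
          (((cγ 1).sub continuous_const).pow 2) |>.continuousOn
      · rwa [interior_Icc]
    intro s hs t ht hst
    have hgs : g s < g t := hgmono hs ht hst
    have hns : ∀ w, ‖γ w - γ 0‖^2 = g w := by
      intro w
      rw [← sq_comp']
      rfl
    have : ‖γ s - γ 0‖^2 < ‖γ t - γ 0‖^2 := by rw [hns, hns]; exact hgs
    exact lt_of_pow_lt_pow_left₀ 2 (norm_nonneg _) this
  refine ⟨part1, part2, ?_⟩
  -- Part 3 : the angle lift
  set t₀ : ℝ := ℓ/2 with ht₀def
  have ht₀ : t₀ ∈ Set.Icc (0:ℝ) ℓ := ⟨by positivity, by linarith⟩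
  set a : ℝ := T t₀ 0 with hadef
  set b : ℝ := T t₀ 1 with hbdef
  have hab : a^2 + b^2 = 1 := hunit t₀ ht₀
  set u : ℝ → ℝ := fun t => a * T t 0 + b * T t 1 with hudef
  set v : ℝ → ℝ := fun t => -b * T t 0 + a * T t 1 with hvdef
  set du : ℝ → ℝ := fun t => a * A t 0 + b * A t 1 with hdudef
  set dv : ℝ → ℝ := fun t => -b * A t 0 + a * A t 1 with hdvdef
  have hu : ∀ t, HasDerivAt u (du t) t :=
    fun t => ((hAd t 0).const_mul a).add ((hAd t 1).const_mul b)
  have hv : ∀ t, HasDerivAt v (dv t) t :=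
    fun t => ((hAd t 0).const_mul (-b)).add ((hAd t 1).const_mul a)
  have hcu : Continuous u := (continuous_const.mul (cT 0)).add (continuous_const.mul (cT 1))
  have hcv : Continuous v := (continuous_const.mul (cT 0)).add (continuous_const.mul (cT 1))
  have hcdu : Continuous du := (continuous_const.mul (cA 0)).add (continuous_const.mul (cA 1))
  have hcdv : Continuous dv := (continuous_const.mul (cA 0)).add (continuous_const.mul (cA 1))
  set ω : ℝ → ℝ := fun t => u t * dv t - v t * du t with hωdef
  have hcω : Continuous ω := (hcu.mul hcdv).sub (hcv.mul hcdu)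
  have hNuv : ∀ t ∈ Set.Icc (0:ℝ) ℓ, (u t)^2 + (v t)^2 = 1 := by
    intro t ht
    have := hunit t ht
    simp only [hudef, hvdef]
    nlinarith [this, hab]
  have hEuv : ∀ t ∈ Set.Icc (0:ℝ) ℓ, u t * du t + v t * dv t = 0 := by
    intro t ht
    have h := horth t ht
    simp only [hudef, hvdef, hdudef, hdvdef]
    nlinarith [h, hab]
  have hωb : ∀ t ∈ Set.Icc (0:ℝ) ℓ, |ω t| ≤ Λ := by
    intro t ht
    have h1 := hNuv t ht
    have h2 := hEuv t ht
    have h3 : (du t)^2 + (dv t)^2 ≤ Λ^2 := by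
      simp only [hdudef, hdvdef]
      nlinarith [hA2 t ht, hab]
    have h4 : (ω t)^2 ≤ Λ^2 := by
      have : (ω t)^2 + (u t * du t + v t * dv t)^2
          = ((u t)^2 + (v t)^2) * ((du t)^2 + (dv t)^2) := by
        simp only [hωdef]; ring
      nlinarith
    rw [abs_le]; constructor <;> nlinarith
  set θ : ℝ → ℝ := fun t => ∫ s in t₀..t, ω s with hθdef
  have hθd : ∀ t, HasDerivAt θ (ω t) t := by
    intro t
    exact intervalIntegral.integral_hasDerivAt_right (hcω.intervalIntegrable _ _)
      (hcω.stronglyMeasurableAtFilter _ _) hcω.continuousAt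
  have hθb : ∀ t ∈ Set.Icc (0:ℝ) ℓ, |θ t| ≤ Λ * |t - t₀| := by
    intro t ht
    have hsub : Set.uIoc t₀ t ⊆ Set.Icc 0 ℓ :=
      Set.uIoc_subset_uIcc.trans (Set.uIcc_subset_Icc ht₀ ht)
    simpa [Real.norm_eq_abs] using
      intervalIntegral.norm_integral_le_of_norm_le_const
        (f := ω) (C := Λ) (a := t₀) (b := t) (fun x hx => by
          simpa [Real.norm_eq_abs] using hωb x (hsub hx))
  set P : ℝ → ℝ := fun t => u t * Real.cos (θ t) + v t * Real.sin (θ t) with hPdef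
  set DP : ℝ → ℝ := fun t => du t * Real.cos (θ t) + dv t * Real.sin (θ t)
      + ω t * (v t * Real.cos (θ t) - u t * Real.sin (θ t)) with hDPdef
  have hP : ∀ t, HasDerivAt P (DP t) t := by
    intro t
    have hcos : HasDerivAt (fun s => Real.cos (θ s)) (-Real.sin (θ t) * ω t) t :=
      (Real.hasDerivAt_cos (θ t)).comp t (hθd t)
    have hsin : HasDerivAt (fun s => Real.sin (θ s)) (Real.cos (θ t) * ω t) t :=
      (Real.hasDerivAt_sin (θ t)).comp t (hθd t)
    have := ((hu t).mul hcos).add ((hv t).mul hsin)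
    refine this.congr_deriv ?_
    simp only [hDPdef]; ring
  have hDP0 : ∀ t ∈ Set.Icc (0:ℝ) ℓ, DP t = 0 := by
    intro t ht
    have h1 := hNuv t ht
    have h2 := hEuv t ht
    simp only [hDPdef, hωdef]
    linear_combination (u t * Real.cos (θ t) + v t * Real.sin (θ t)) * h2
      - (du t * Real.cos (θ t) + dv t * Real.sin (θ t)) * h1
  have hPconst : ∀ t ∈ Set.Icc (0:ℝ) ℓ, P t = 1 := by
    have hPt₀ : P t₀ = 1 := by
      have hθ0 : θ t₀ = 0 := intervalIntegral.integral_same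
      simp only [hPdef, hθ0, Real.cos_zero, Real.sin_zero, hudef, hvdef, mul_one, mul_zero]
      linear_combination hab
    intro t ht
    have := Convex.norm_image_sub_le_of_norm_hasDerivWithin_le
      (f := P) (f' := DP) (C := 0) (fun x hx => (hP x).hasDerivWithinAt)
      (fun x hx => by simp [hDP0 x hx]) (convex_Icc 0 ℓ) ht₀ ht
    have h0 : ‖P t - P t₀‖ ≤ 0 := by simpa using this
    have : P t = P t₀ := by
      have := norm_sub_eq_zero_iff.mp (le_antisymm h0 (norm_nonneg _))
      exact this
    rw [this, hPt₀]
  have hueq : ∀ t ∈ Set.Icc (0:ℝ) ℓ, u t = Real.cos (θ t) := by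
    intro t ht
    have h1 := hNuv t ht
    have h2 := hPconst t ht
    have h3 := Real.sin_sq_add_cos_sq (θ t)
    have h4 : (u t - Real.cos (θ t))^2 + (v t - Real.sin (θ t))^2 = 0 := by
      simp only [hPdef] at h2; nlinarith
    have h5 : (u t - Real.cos (θ t))^2 = 0 := by
      nlinarith [sq_nonneg (u t - Real.cos (θ t)), sq_nonneg (v t - Real.sin (θ t))]
    have := pow_eq_zero_iff (n := 2) (by norm_num) |>.mp h5
    linarith [sub_eq_zero.mp this]
  -- lower bound on u
  have hπ : (2:ℝ) < π := by linarith [Real.pi_gt_three]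
  have huge : ∀ t ∈ Set.Icc (0:ℝ) ℓ, Real.cos (Λ * (t - t₀)) ≤ u t := by
    intro t ht
    rw [hueq t ht, ← Real.cos_abs (θ t), ← Real.cos_abs (Λ * (t - t₀))]
    apply Real.cos_le_cos_of_nonneg_of_le_pi (abs_nonneg _)
    · -- |Λ (t - t₀)| ≤ π
      rw [abs_mul, abs_of_pos hΛ]
      have : |t - t₀| ≤ ℓ/2 := by
        rw [abs_le]; constructor <;> linarith [ht.1, ht.2, ht₀def]
      nlinarith [hΛℓ, hΛ.le, hπ]
    · calc |θ t| ≤ Λ * |t - t₀| := hθb t ht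
        _ = |Λ * (t - t₀)| := by rw [abs_mul, abs_of_pos hΛ]
  -- integrate
  have hFTCu : ∫ t in (0:ℝ)..ℓ, u t
      = (a * γ ℓ 0 + b * γ ℓ 1) - (a * γ 0 0 + b * γ 0 1) := by
    apply intervalIntegral.integral_eq_sub_of_hasDerivAt
      (fun t _ => ((hTd t 0).const_mul a).add ((hTd t 1).const_mul b))
      (hcu.intervalIntegrable 0 ℓ)
  have hFTCcos : ∫ t in (0:ℝ)..ℓ, Real.cos (Λ * (t - t₀)) = 2 * Real.sin (Λ * ℓ / 2) / Λ := by
    have hder : ∀ t ∈ Set.uIcc (0:ℝ) ℓ,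
        HasDerivAt (fun w => Real.sin (Λ * (w - t₀)) / Λ) (Real.cos (Λ * (t - t₀))) t := by
      intro t _
      have hin : HasDerivAt (fun w : ℝ => Λ * (w - t₀)) Λ t := by
        have := ((hasDerivAt_id t).sub_const t₀).const_mul Λ
        simpa using this
      have := ((Real.hasDerivAt_sin (Λ * (t - t₀))).comp t hin).div_const Λ
      refine this.congr_deriv ?_
      field_simp
    rw [intervalIntegral.integral_eq_sub_of_hasDerivAt hder
      (by apply Continuous.intervalIntegrable; fun_prop)]
    have h1 : Λ * (ℓ - t₀) = Λ * ℓ / 2 := by rw [ht₀def]; ring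
    have h2 : Λ * ((0:ℝ) - t₀) = -(Λ * ℓ / 2) := by rw [ht₀def]; ring
    rw [h1, h2, Real.sin_neg]
    field_simp
    ring
  have hmono : ∫ t in (0:ℝ)..ℓ, Real.cos (Λ * (t - t₀)) ≤ ∫ t in (0:ℝ)..ℓ, u t := by
    apply intervalIntegral.integral_mono_on hℓ.le
      (by apply Continuous.intervalIntegrable; fun_prop)
      (hcu.intervalIntegrable 0 ℓ)
    exact huge
  -- Cauchy–Schwarz : F ℓ - F 0 ≤ d
  set d : ℝ := ‖γ ℓ - γ 0‖ with hddef
  have hd2 : (γ ℓ 0 - γ 0 0)^2 + (γ ℓ 1 - γ 0 1)^2 = d^2 := by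
    rw [hddef, ← sq_comp']
    rfl
  have hCS : (a * γ ℓ 0 + b * γ ℓ 1) - (a * γ 0 0 + b * γ 0 1) ≤ d := by
    nlinarith [sq_nonneg (a * (γ ℓ 1 - γ 0 1) - b * (γ ℓ 0 - γ 0 0)),
      norm_nonneg (γ ℓ - γ 0), hd2, hab,
      sq_nonneg ((a * (γ ℓ 0 - γ 0 0) + b * (γ ℓ 1 - γ 0 1)) - d)]
  have hsind : Real.sin (Λ * ℓ / 2) ≤ Λ * d / 2 := by
    have h1 : 2 * Real.sin (Λ * ℓ / 2) / Λ ≤ d := by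
      rw [← hFTCcos]
      calc (∫ t in (0:ℝ)..ℓ, Real.cos (Λ * (t - t₀)))
          ≤ ∫ t in (0:ℝ)..ℓ, u t := hmono
        _ = (a * γ ℓ 0 + b * γ ℓ 1) - (a * γ 0 0 + b * γ 0 1) := hFTCu
        _ ≤ d := hCS
    rw [div_le_iff₀ hΛ] at h1
    linarith
  -- conclude with arcsin
  have hXle : Λ * ℓ / 2 ≤ π/2 := by nlinarith [hΛℓ, hπ]
  have hX0 : (0:ℝ) ≤ Λ * ℓ / 2 := by positivity
  have harcsin : Λ * ℓ / 2 ≤ Real.arcsin (Λ * d / 2) := by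
    calc Λ * ℓ / 2 = Real.arcsin (Real.sin (Λ * ℓ / 2)) :=
          (Real.arcsin_sin (by linarith [Real.pi_pos]) hXle).symm
      _ ≤ Real.arcsin (Λ * d / 2) := Real.monotone_arcsin hsind
  calc ℓ = (2/Λ) * (Λ * ℓ / 2) := by field_simp
    _ ≤ (2/Λ) * Real.arcsin (Λ * d / 2) := by
        apply mul_le_mul_of_nonneg_left harcsin (by positivity)
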